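/- Let μ be a probability measure on a measurable space (X, B) and let {A_1, A_2, …} be a countable measurable partition of X. For X_1, …, X_n drawn i.i.d. from μ, let U_n = |{ i : A_i ∩ {X_1, …, X_n} ≠ ∅ }| be the number of cells occupied by the sample. Then E[U_n] = o(n), i.e., E[U_n]/n → 0 as n → ∞. -/

import Mathlib

open MeasureTheory Filter
open scoped ENNReal

set_option maxHeartbeats 1000000 in
/-- For a countable measurable partition `{A_i}` of a probability space and an i.i.d.
sample `X_1, …, X_n ∼ μ`, the expected number `E[U_n]` of cells occupied by the sample
is `o(n)`. -/
theorem expected_occupied_cells_sublinear {X : Type*} [MeasurableSpace X]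
    (μ : Measure X) [IsProbabilityMeasure μ]
    (A : ℕ → Set X) (hAm : ∀ i, MeasurableSet (A i))
    (hdisj : Pairwise (Function.onFun Disjoint A)) (hcover : (⋃ i, A i) = Set.univ) :
    Tendsto (fun n : ℕ =>
        (∫⁻ ω : Fin n → X,
          (Set.ncard {i : ℕ | ∃ k, ω k ∈ A i} : ℝ≥0∞) ∂(Measure.pi fun _ : Fin n => μ))
          / (n : ℝ≥0∞))
      atTop (nhds 0) := by
  classical
  have hsum : ∑' i, μ (A i) = 1 := by
    rw [← measure_iUnion hdisj hAm, hcover, measure_univ]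
  -- measurability of the "cell i is hit" events
  have hBrep : ∀ (n : ℕ) (i : ℕ),
      {ω : Fin n → X | ∃ k, ω k ∈ A i} = ⋃ k : Fin n, (fun ω : Fin n → X => ω k) ⁻¹' A i := by
    intro n i; ext ω; simp
  have hB : ∀ (n : ℕ) (i : ℕ), MeasurableSet {ω : Fin n → X | ∃ k, ω k ∈ A i} := by
    intro n i
    rw [hBrep n i]
    exact MeasurableSet.iUnion fun k => (measurable_pi_apply k) (hAm i)
  -- pointwise identity: ncard = tsum of indicators
  have hcount : ∀ (n : ℕ) (ω : Fin n → X),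
      (Set.ncard {i : ℕ | ∃ k, ω k ∈ A i} : ℝ≥0∞)
        = ∑' i : ℕ, Set.indicator {ω' : Fin n → X | ∃ k, ω' k ∈ A i} (fun _ => 1) ω := by
    intro n ω
    have hg : ∀ k : Fin n, ∃ i, ω k ∈ A i := fun k => by
      have : ω k ∈ ⋃ i, A i := by rw [hcover]; trivial
      exact Set.mem_iUnion.mp this
    choose g hgmem using hg
    have hfin : {i : ℕ | ∃ k, ω k ∈ A i}.Finite := by
      apply Set.Finite.subset (Set.finite_range g)
      rintro i ⟨k, hk⟩
      have hig : i = g k := by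
        by_contra h
        exact Set.disjoint_left.mp (hdisj h) hk (hgmem k)
      exact ⟨k, hig.symm⟩
    have hpt : ∀ i : ℕ, Set.indicator {ω' : Fin n → X | ∃ k, ω' k ∈ A i} (fun _ => (1 : ℝ≥0∞)) ω
        = Set.indicator {i : ℕ | ∃ k, ω k ∈ A i} (fun _ => (1 : ℝ≥0∞)) i := by
      intro i
      by_cases h : ∃ k, ω k ∈ A i
      · simp [Set.indicator_apply, Set.mem_setOf_eq, h]
      · simp [Set.indicator_apply, Set.mem_setOf_eq, h]
    simp_rw [hpt]
    rw [tsum_eq_sum (s := hfin.toFinset)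
        (fun i hi => Set.indicator_of_notMem (by simpa using hi) _)]
    rw [Finset.sum_congr rfl
        (fun i hi => Set.indicator_of_mem (by simpa using hi) (fun _ => (1 : ℝ≥0∞)))]
    rw [Finset.sum_const, nsmul_eq_mul, mul_one,
      Set.ncard_eq_toFinset_card _ hfin]
  -- the integral equals the sum of hitting probabilities
  have hint : ∀ n : ℕ,
      (∫⁻ ω : Fin n → X,
          (Set.ncard {i : ℕ | ∃ k, ω k ∈ A i} : ℝ≥0∞) ∂(Measure.pi fun _ : Fin n => μ))
        = ∑' i : ℕ, (Measure.pi fun _ : Fin n => μ) {ω | ∃ k, ω k ∈ A i} := by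
    intro n
    simp_rw [hcount n]
    rw [lintegral_tsum fun i => (measurable_const.indicator (hB n i)).aemeasurable]
    congr 1
    ext i
    rw [lintegral_indicator (hB n i) _, setLIntegral_one]
  -- union bound
  have hle : ∀ (n : ℕ) (i : ℕ),
      (Measure.pi fun _ : Fin n => μ) {ω | ∃ k, ω k ∈ A i} ≤ n * μ (A i) := by
    intro n i
    rw [hBrep n i]
    refine (measure_iUnion_le _).trans ?_
    have hev : ∀ k : Fin n,
        (Measure.pi fun _ : Fin n => μ) ((fun ω : Fin n → X => ω k) ⁻¹' A i) = μ (A i) := by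
      intro k
      have : (fun ω : Fin n → X => ω k) ⁻¹' A i
          = Set.pi Set.univ (Function.update (fun _ : Fin n => (Set.univ : Set X)) k (A i)) :=
        Set.eval_preimage
      rw [this, Measure.pi_pi]
      rw [Finset.prod_eq_single k (fun j _ hj => by
        rw [Function.update_of_ne hj]; exact measure_univ) (by simp)]
      simp
    simp_rw [hev, tsum_fintype, Finset.sum_const, Finset.card_univ, Fintype.card_fin,
      nsmul_eq_mul]
    exact le_rfl
  have hle1 : ∀ (n : ℕ) (i : ℕ),
      (Measure.pi fun _ : Fin n => μ) {ω | ∃ k, ω k ∈ A i} ≤ 1 :=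
    fun n i => prob_le_one
  rw [ENNReal.tendsto_nhds_zero]
  intro ε hε
  have hhalf : 0 < ε / 2 := ENNReal.half_pos hε.ne'
  obtain ⟨N, hN⟩ : ∃ N : ℕ, ∑' i, μ (A (i + N)) < ε / 2 :=
    ((ENNReal.tendsto_sum_nat_add (fun i => μ (A i))
      (by rw [hsum]; exact ENNReal.one_ne_top)).eventually_lt_const hhalf).exists
  -- key bound
  have key : ∀ n : ℕ,
      (∫⁻ ω : Fin n → X,
          (Set.ncard {i : ℕ | ∃ k, ω k ∈ A i} : ℝ≥0∞) ∂(Measure.pi fun _ : Fin n => μ))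
        ≤ N + n * ∑' i, μ (A (i + N)) := by
    intro n
    rw [hint n]
    have hsplit := (Summable.sum_add_tsum_nat_add' (f := fun i =>
      (Measure.pi fun _ : Fin n => μ) {ω | ∃ k, ω k ∈ A i}) (k := N)
      ENNReal.summable).symm
    rw [hsplit]
    refine add_le_add ?_ ?_
    · calc ∑ i ∈ Finset.range N, (Measure.pi fun _ : Fin n => μ) {ω | ∃ k, ω k ∈ A i}
          ≤ ∑ _i ∈ Finset.range N, (1 : ℝ≥0∞) :=
            Finset.sum_le_sum fun i _ => hle1 n i
        _ = N := by simp
    · calc ∑' i, (Measure.pi fun _ : Fin n => μ) {ω | ∃ k, ω k ∈ A (i + N)}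
          ≤ ∑' i, (n : ℝ≥0∞) * μ (A (i + N)) :=
            ENNReal.tsum_le_tsum fun i => hle n (i + N)
        _ = n * ∑' i, μ (A (i + N)) := ENNReal.tsum_mul_left
  have h2 : Tendsto (fun n : ℕ => (N : ℝ≥0∞) / n) atTop (nhds 0) := by
    have := ENNReal.Tendsto.const_mul (a := (N : ℝ≥0∞))
      ENNReal.tendsto_inv_nat_nhds_zero (Or.inr (ENNReal.natCast_ne_top N))
    simpa [ENNReal.div_eq_inv_mul, mul_comm] using this
  filter_upwards [h2.eventually_le_const hhalf, eventually_ge_atTop 1] with n h1 hn1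
  have hn0 : (n : ℝ≥0∞) ≠ 0 := by exact_mod_cast Nat.one_le_iff_ne_zero.mp hn1
  calc (∫⁻ ω : Fin n → X,
          (Set.ncard {i : ℕ | ∃ k, ω k ∈ A i} : ℝ≥0∞) ∂(Measure.pi fun _ : Fin n => μ))
        / (n : ℝ≥0∞)
      ≤ ((N : ℝ≥0∞) + n * ∑' i, μ (A (i + N))) / n :=
        ENNReal.div_le_div_right (key n) _
    _ = (N : ℝ≥0∞) / n + (n * ∑' i, μ (A (i + N))) / n := ENNReal.add_div
    _ ≤ ε / 2 + ∑' i, μ (A (i + N)) := by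
        refine add_le_add h1 (le_of_eq ?_)
        rw [div_eq_mul_inv, mul_comm (n : ℝ≥0∞), mul_assoc,
          ENNReal.mul_inv_cancel hn0 (ENNReal.natCast_ne_top n), mul_one]
    _ ≤ ε / 2 + ε / 2 := add_le_add_right hN.le _
    _ = ε := ENNReal.add_halves ε
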